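/- If i : C → D is a G-equivariant Dwyer map and T is a small category with a right G-action, then Fun(T,i) : Fun(T,C) → Fun(T,D) is a G-equivariant Dwyer map, where G acts on functor categories by conjugation. -/

import Mathlib

open CategoryTheory

universe u

namespace GGlobal

/-- A strict action of a group (or monoid) `G` on a category `C`, given by a monoid
homomorphism into the endomorphism monoid of `C` in `Cat`. -/
abbrev GAct (G : Type u) [Monoid G] (C : Type u) [Category.{u} C] : Type u :=
  G →* CategoryTheory.End (Cat.of C)

variable {G : Type u} [Group G] {C D : Type u} [Category.{u} C] [Category.{u} D]

/-- A functor is strictly `G`-equivariant. -/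
def EquivFun (ρC : GAct G C) (ρD : GAct G D) (F : C ⥤ D) : Prop :=
  ∀ g : G, ((ρC g).toFunctor : C ⥤ C) ⋙ F = F ⋙ ((ρD g).toFunctor : D ⥤ D)

/-- The `H`-fixed points of a `G`-category: objects fixed by all of `H`. -/
structure Fixed (ρ : GAct G C) (H : Subgroup G) : Type u where
  obj : C
  fixed : ∀ h ∈ H, (((ρ h).toFunctor : C ⥤ C)).obj obj = obj

instance {ρ : GAct G C} {H : Subgroup G} : Category.{u} (Fixed ρ H) where
  Hom x y := { φ : x.obj ⟶ y.obj //
    ∀ h (hh : h ∈ H), ((ρ h).toFunctor : C ⥤ C).map φ =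
      eqToHom (x.fixed h hh) ≫ φ ≫ eqToHom (y.fixed h hh).symm }
  id x := ⟨𝟙 x.obj, by
    intro h hh
    have key : ∀ (F : C ⥤ C) (a : C) (p : F.obj a = a),
        F.map (𝟙 a) = eqToHom p ≫ 𝟙 a ≫ eqToHom p.symm := by
      intros; simp
    exact key _ _ _⟩
  comp f g := ⟨f.1 ≫ g.1, by
    intro h hh
    have key : ∀ (F : C ⥤ C) {a b c : C} (φ : a ⟶ b) (ψ : b ⟶ c) (pa : F.obj a = a)
        (pb : F.obj b = b) (pc : F.obj c = c),
        F.map φ = eqToHom pa ≫ φ ≫ eqToHom pb.symm →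
        F.map ψ = eqToHom pb ≫ ψ ≫ eqToHom pc.symm →
        F.map (φ ≫ ψ) = eqToHom pa ≫ (φ ≫ ψ) ≫ eqToHom pc.symm := by
      intro F a b c φ ψ pa pb pc h1 h2
      rw [Functor.map_comp, h1, h2]
      simp
    rename_i X Y Z
    exact key _ _ _ _ _ (Z.fixed h hh) (f.2 h hh) (g.2 h hh)⟩
  id_comp f := Subtype.ext (by simp)
  comp_id f := Subtype.ext (by simp)
  assoc f g h := Subtype.ext (by simp)

/-- The functor induced on `H`-fixed points by a strictly equivariant functor. -/
def FixedFunctor (ρC : GAct G C) (ρD : GAct G D) (i : C ⥤ D) (hi : EquivFun ρC ρD i)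
    (H : Subgroup G) : Fixed ρC H ⥤ Fixed ρD H where
  obj x := ⟨i.obj x.obj, fun h hh => by
    have := Functor.congr_obj (hi h) x.obj
    exact this.symm.trans (congrArg i.obj (x.fixed h hh))⟩
  map {x y} φ := ⟨i.map φ.1, fun h hh => by
    have key : ∀ (FC : C ⥤ C) (FD : D ⥤ D) (e : FC ⋙ i = i ⋙ FD) {a b : C} (φ : a ⟶ b)
        (pa : FC.obj a = a) (pb : FC.obj b = b) (qa : FD.obj (i.obj a) = i.obj a)
        (qb : FD.obj (i.obj b) = i.obj b),
        FC.map φ = eqToHom pa ≫ φ ≫ eqToHom pb.symm →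
        FD.map (i.map φ) = eqToHom qa ≫ i.map φ ≫ eqToHom qb.symm := by
      intro FC FD e a b φ pa pb qa qb hφ
      have h2 := Functor.congr_hom e.symm φ
      simp only [Functor.comp_obj, Functor.comp_map] at h2
      rw [h2, hφ]
      simp [eqToHom_map]
    refine key _ _ (hi h) φ.1 _ (y.fixed h hh) ?_ ?_ (φ.2 h hh)
    · exact (Functor.congr_obj (hi h) y.obj).symm.trans (congrArg i.obj (y.fixed h hh))⟩
  map_id x := Subtype.ext (by exact i.map_id x.obj)
  map_comp f g := Subtype.ext (by exact i.map_comp f.1 g.1)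

/-- A functor is a sieve inclusion: fully faithful, injective on objects, and closed
under precomposition: any morphism of `D` with target in the image lies in the image. -/
structure IsSieve (i : C ⥤ D) : Prop where
  full : i.Full
  faithful : i.Faithful
  injObj : Function.Injective i.obj
  closed : ∀ {c : C} {d : D}, (d ⟶ i.obj c) → ∃ c', i.obj c' = d

/-- A functor is a cosieve inclusion: fully faithful, injective on objects, and closed
under postcomposition: any morphism of `D` with source in the image lies in the image. -/
structure IsCosieve (i : C ⥤ D) : Prop where
  full : i.Full
  faithful : i.Faithful
  injObj : Function.Injective i.obj
  closed : ∀ {c : C} {d : D}, (i.obj c ⟶ d) → ∃ c', i.obj c' = d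

/-- A Dwyer map: a sieve admitting a factorization through a cosieve by a functor
admitting a right adjoint. -/
def IsDwyer (i : C ⥤ D) : Prop :=
  IsSieve i ∧ ∃ (X : Cat.{u, u}) (f : C ⥤ X) (j : X ⥤ D),
    i = f ⋙ j ∧ IsCosieve j ∧ ∃ r : X ⥤ C, Nonempty (f ⊣ r)

/-- A `G`-equivariant Dwyer map: an equivariant sieve admitting an equivariant
factorization through an equivariant cosieve by an equivariant functor admitting a
`G`-equivariant right adjoint (with equivariant unit and counit). -/
def IsGDwyer (ρC : GAct G C) (ρD : GAct G D) (i : C ⥤ D) : Prop :=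
  IsSieve i ∧ EquivFun ρC ρD i ∧
    ∃ (X : Cat.{u, u}) (ρX : GAct G X) (f : C ⥤ X) (j : X ⥤ D),
      i = f ⋙ j ∧ EquivFun ρC ρX f ∧ EquivFun ρX ρD j ∧ IsCosieve j ∧
        ∃ (r : X ⥤ C) (adj : f ⊣ r), EquivFun ρX ρC r ∧
          (∀ (g : G) (c : C),
            HEq (((ρC g).toFunctor : C ⥤ C).map (adj.unit.app c)) (adj.unit.app (((ρC g).toFunctor : C ⥤ C).obj c))) ∧
          (∀ (g : G) (x : X),
            HEq (((ρX g).toFunctor : X ⥤ X).map (adj.counit.app x)) (adj.counit.app (((ρX g).toFunctor : X ⥤ X).obj x)))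

end GGlobal

open GGlobal

section Helpers

variable {G : Type u} [Group G] {T : Type u} [Category.{u} T]

lemma natTrans_hext {A : Type u} [Category.{u} A] {F₁ F₂ F₁' F₂' : T ⥤ A}
    (h1 : F₁ = F₁') (h2 : F₂ = F₂') (α : F₁ ⟶ F₂) (α' : F₁' ⟶ F₂')
    (h : ∀ t, HEq (α.app t) (α'.app t)) : HEq α α' := by
  subst h1; subst h2
  exact heq_of_eq (NatTrans.ext (funext fun t => eq_of_heq (h t)))

lemma injObj_whisker {C D : Type u} [Category.{u} C] [Category.{u} D]
    (i : C ⥤ D) (hfull : i.Full) (hfaith : i.Faithful)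
    (hinj : Function.Injective i.obj) :
    Function.Injective ((Functor.whiskeringRight T C D).obj i).obj := by
  haveI := hfaith
  intro F F' h
  have e : ∀ t, F.obj t = F'.obj t := fun t => hinj (Functor.congr_obj h t)
  refine Functor.hext e ?_
  intro t t' φ
  have : F.map φ = eqToHom (e t) ≫ F'.map φ ≫ eqToHom (e t').symm := by
    apply i.map_injective
    have hm := Functor.congr_hom h φ
    simp only [Functor.map_comp, eqToHom_map]
    exact hm
  rw [this]; simp

lemma isSieve_whisker {C D : Type u} [Category.{u} C] [Category.{u} D]
    (i : C ⥤ D) (hi : IsSieve i) : IsSieve ((Functor.whiskeringRight T C D).obj i) := by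
  haveI := hi.full; haveI := hi.faithful
  refine ⟨inferInstance, inferInstance, injObj_whisker i hi.full hi.faithful hi.injObj, ?_⟩
  intro F K α
  have hc : ∀ t : T, ∃ c, i.obj c = K.obj t := fun t => hi.closed (α.app t)
  choose c hc using hc
  refine ⟨{ obj := c
            map := fun {t t'} φ => i.preimage (eqToHom (hc t) ≫ K.map φ ≫ eqToHom (hc t').symm)
            map_id := ?_
            map_comp := ?_ }, ?_⟩
  · intro t; apply i.map_injective; simp
  · intro t t' t'' φ ψ; apply i.map_injective; simp
  · refine Functor.hext (fun t => hc t) ?_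
    intro t t' φ
    show HEq (i.map (i.preimage _)) (K.map φ)
    rw [i.map_preimage]; simp

lemma isCosieve_whisker {C D : Type u} [Category.{u} C] [Category.{u} D]
    (i : C ⥤ D) (hi : IsCosieve i) : IsCosieve ((Functor.whiskeringRight T C D).obj i) := by
  haveI := hi.full; haveI := hi.faithful
  refine ⟨inferInstance, inferInstance, injObj_whisker i hi.full hi.faithful hi.injObj, ?_⟩
  intro F K α
  have hc : ∀ t : T, ∃ c, i.obj c = K.obj t := fun t => hi.closed (α.app t)
  choose c hc using hc
  refine ⟨{ obj := c
            map := fun {t t'} φ => i.preimage (eqToHom (hc t) ≫ K.map φ ≫ eqToHom (hc t').symm)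
            map_id := ?_
            map_comp := ?_ }, ?_⟩
  · intro t; apply i.map_injective; simp
  · intro t t' t'' φ ψ; apply i.map_injective; simp
  · refine Functor.hext (fun t => hc t) ?_
    intro t t' φ
    show HEq (i.map (i.preimage _)) (K.map φ)
    rw [i.map_preimage]; simp

end Helpers

section Equiv

variable {G : Type u} [Group G] {T : Type u} [Category.{u} T]

/-- Object-level computation for the conjugation action. -/
lemma conj_obj_eq {A B : Type u} [Category.{u} A] [Category.{u} B]
    (σ : T ⥤ T) (ρA : A ⥤ A) (ρB : B ⥤ B) (u : A ⥤ B)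
    (hu : ρA ⋙ u = u ⋙ ρB) (F : T ⥤ A) :
    ((σ ⋙ F) ⋙ ρA) ⋙ u = (σ ⋙ (F ⋙ u)) ⋙ ρB := by
  show (σ ⋙ F) ⋙ (ρA ⋙ u) = (σ ⋙ F) ⋙ (u ⋙ ρB)
  rw [hu]

lemma equivFun_whisker {A B : Type u} [Category.{u} A] [Category.{u} B]
    (ρT : GAct Gᵐᵒᵖ T) (ρA : GAct G A) (ρB : GAct G B)
    (ρFA : GAct G (T ⥤ A)) (ρFB : GAct G (T ⥤ B))
    (hFA : ∀ g : G, ((ρFA g).toFunctor : (T ⥤ A) ⥤ (T ⥤ A)) =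
      (Functor.whiskeringLeft T T A).obj ((ρT (MulOpposite.op g)).toFunctor : T ⥤ T) ⋙
        (Functor.whiskeringRight T A A).obj ((ρA g).toFunctor : A ⥤ A))
    (hFB : ∀ g : G, ((ρFB g).toFunctor : (T ⥤ B) ⥤ (T ⥤ B)) =
      (Functor.whiskeringLeft T T B).obj ((ρT (MulOpposite.op g)).toFunctor : T ⥤ T) ⋙
        (Functor.whiskeringRight T B B).obj ((ρB g).toFunctor : B ⥤ B))
    (u : A ⥤ B) (hu : EquivFun ρA ρB u) :
    EquivFun ρFA ρFB ((Functor.whiskeringRight T A B).obj u) := by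
  intro g
  rw [hFA g, hFB g]
  have hobj : ∀ F : T ⥤ A,
      ((((ρT (MulOpposite.op g)).toFunctor : T ⥤ T) ⋙ F) ⋙ ((ρA g).toFunctor : A ⥤ A)) ⋙ u =
      (((ρT (MulOpposite.op g)).toFunctor : T ⥤ T) ⋙ (F ⋙ u)) ⋙ ((ρB g).toFunctor : B ⥤ B) :=
    fun F => conj_obj_eq _ _ _ u (hu g) F
  refine Functor.hext (fun F => hobj F) ?_
  intro F F' α
  refine natTrans_hext (hobj F) (hobj F') _ _ ?_
  intro t
  show HEq (u.map (((ρA g).toFunctor : A ⥤ A).map (α.app (((ρT (MulOpposite.op g)).toFunctor : T ⥤ T).obj t))))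
    (((ρB g).toFunctor : B ⥤ B).map (u.map (α.app (((ρT (MulOpposite.op g)).toFunctor : T ⥤ T).obj t))))
  have := Functor.congr_hom (hu g) (α.app (((ρT (MulOpposite.op g)).toFunctor : T ⥤ T).obj t))
  erw [Functor.comp_map, Functor.comp_map] at this
  rw [this]
  exact (eqToHom_comp_heq _ _).trans (comp_eqToHom_heq _ _)

/-- The conjugation action on a functor category. -/
def funAct {A : Type u} [Category.{u} A] (ρT : GAct Gᵐᵒᵖ T) (ρA : GAct G A) :
    GAct G (T ⥤ A) where
  toFun g := Functor.toCatHom ((Functor.whiskeringLeft T T A).obj ((ρT (MulOpposite.op g)).toFunctor : T ⥤ T) ⋙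
      (Functor.whiskeringRight T A A).obj ((ρA g).toFunctor : A ⥤ A) : (T ⥤ A) ⥤ (T ⥤ A))
  map_one' := by
    show Functor.toCatHom ((Functor.whiskeringLeft T T A).obj ((ρT (MulOpposite.op 1)).toFunctor : T ⥤ T) ⋙
      (Functor.whiskeringRight T A A).obj ((ρA 1).toFunctor : A ⥤ A)) = (1 : CategoryTheory.End (Cat.of (T ⥤ A)))
    rw [MulOpposite.op_one, map_one, map_one]
    rfl
  map_mul' g h := by
    show Functor.toCatHom ((Functor.whiskeringLeft T T A).obj ((ρT (MulOpposite.op (g * h))).toFunctor : T ⥤ T) ⋙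
      (Functor.whiskeringRight T A A).obj ((ρA (g * h)).toFunctor : A ⥤ A)) = _
    rw [MulOpposite.op_mul, map_mul, map_mul]
    rfl

lemma funAct_coe {A : Type u} [Category.{u} A] (ρT : GAct Gᵐᵒᵖ T) (ρA : GAct G A) (g : G) :
    ((funAct ρT ρA g).toFunctor : (T ⥤ A) ⥤ (T ⥤ A)) =
      (Functor.whiskeringLeft T T A).obj ((ρT (MulOpposite.op g)).toFunctor : T ⥤ T) ⋙
        (Functor.whiskeringRight T A A).obj ((ρA g).toFunctor : A ⥤ A) := rfl

end Equiv

section Adj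

variable {G : Type u} [Group G] {T : Type u} [Category.{u} T]

/-- The whiskered adjunction, built with explicit unit and counit. -/
def whiskerAdj {A B : Type u} [Category.{u} A] [Category.{u} B]
    (f : A ⥤ B) (r : B ⥤ A) (adj : f ⊣ r) :
    (Functor.whiskeringRight T A B).obj f ⊣ (Functor.whiskeringRight T B A).obj r :=
  Adjunction.mkOfUnitCounit
  { unit :=
    { app := fun F =>
      { app := fun t => adj.unit.app (F.obj t)
        naturality := fun t t' φ => by
          simpa using (adj.unit.naturality (F.map φ)) }
      naturality := fun F F' β => by
        ext t
        simpa using (adj.unit.naturality (β.app t)) }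
    counit :=
    { app := fun K =>
      { app := fun t => adj.counit.app (K.obj t)
        naturality := fun t t' φ => by
          simpa using (adj.counit.naturality (K.map φ)) }
      naturality := fun K K' β => by
        ext t
        simpa using (adj.counit.naturality (β.app t)) }
    left_triangle := by
      ext F t
      simpa using adj.left_triangle_components (F.obj t)
    right_triangle := by
      ext K t
      simpa using adj.right_triangle_components (K.obj t) }

lemma whiskerAdj_unit_app_app {A B : Type u} [Category.{u} A] [Category.{u} B]
    (f : A ⥤ B) (r : B ⥤ A) (adj : f ⊣ r) (F : T ⥤ A) (t : T) :
    ((whiskerAdj f r adj).unit.app F).app t = adj.unit.app (F.obj t) := rfl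

lemma whiskerAdj_counit_app_app {A B : Type u} [Category.{u} A] [Category.{u} B]
    (f : A ⥤ B) (r : B ⥤ A) (adj : f ⊣ r) (K : T ⥤ B) (t : T) :
    ((whiskerAdj f r adj).counit.app K).app t = adj.counit.app (K.obj t) := rfl

end Adj
/-- If `i : C → D` is a `G`-equivariant Dwyer map and `T` is a small category with a
right `G`-action, then `Fun(T, i) : Fun(T, C) → Fun(T, D)` is a `G`-equivariant Dwyer
map, where `G` acts on the functor categories by conjugation:
`(g.F)(t) = g.F(t.g)`. -/
theorem fun_isGDwyer
    {G : Type u} [Group G] {T C D : Type u}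
    [Category.{u} T] [Category.{u} C] [Category.{u} D]
    (ρT : GAct Gᵐᵒᵖ T)  -- a right `G`-action on `T`
    (ρC : GAct G C) (ρD : GAct G D)
    (i : C ⥤ D) (hDwyer : IsGDwyer ρC ρD i)
    (ρFC : GAct G (T ⥤ C)) (ρFD : GAct G (T ⥤ D))
    (hFC : ∀ g : G, ((ρFC g).toFunctor : (T ⥤ C) ⥤ (T ⥤ C)) =
      (Functor.whiskeringLeft T T C).obj ((ρT (MulOpposite.op g)).toFunctor : T ⥤ T) ⋙
        (Functor.whiskeringRight T C C).obj ((ρC g).toFunctor : C ⥤ C))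
    (hFD : ∀ g : G, ((ρFD g).toFunctor : (T ⥤ D) ⥤ (T ⥤ D)) =
      (Functor.whiskeringLeft T T D).obj ((ρT (MulOpposite.op g)).toFunctor : T ⥤ T) ⋙
        (Functor.whiskeringRight T D D).obj ((ρD g).toFunctor : D ⥤ D)) :
    IsGDwyer ρFC ρFD ((Functor.whiskeringRight T C D).obj i) := by
  obtain ⟨hsieve, hequiv, X₀, ρX₀, f, j, hfact, hf, hj, hjcos, r, adj, hr, hunit, hcounit⟩ :=
    hDwyer
  refine ⟨isSieve_whisker i hsieve,
    equivFun_whisker ρT ρC ρD ρFC ρFD hFC hFD i hequiv,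
    Cat.of (T ⥤ X₀), funAct ρT ρX₀,
    (Functor.whiskeringRight T C X₀).obj f, (Functor.whiskeringRight T X₀ D).obj j,
    ?_, ?_, ?_, isCosieve_whisker j hjcos,
    (Functor.whiskeringRight T X₀ C).obj r, whiskerAdj f r adj, ?_, ?_, ?_⟩
  · rw [hfact]; rfl
  · exact equivFun_whisker ρT ρC ρX₀ ρFC (funAct ρT ρX₀) hFC (funAct_coe ρT ρX₀) f hf
  · exact equivFun_whisker ρT ρX₀ ρD (funAct ρT ρX₀) ρFD (funAct_coe ρT ρX₀) hFD j hj
  · exact equivFun_whisker ρT ρX₀ ρC (funAct ρT ρX₀) ρFC (funAct_coe ρT ρX₀) hFC r hr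
  · -- unit equivariance
    intro g F
    rw [hFC g]
    have hcomp : (f ⋙ (r ⋙ ((ρC g).toFunctor : C ⥤ C))) = (((ρC g).toFunctor : C ⥤ C) ⋙ (f ⋙ r)) := by
      exact (congrArg (fun Φ => f ⋙ Φ) (hr g).symm).trans (congrArg (fun Φ => Φ ⋙ r) (hf g).symm)
    have h2 : ((((ρT (MulOpposite.op g)).toFunctor : T ⥤ T) ⋙ ((F ⋙ f) ⋙ r)) ⋙ ((ρC g).toFunctor : C ⥤ C)) =
        ((((((ρT (MulOpposite.op g)).toFunctor : T ⥤ T) ⋙ F) ⋙ ((ρC g).toFunctor : C ⥤ C)) ⋙ f) ⋙ r) := by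
      show (((ρT (MulOpposite.op g)).toFunctor : T ⥤ T) ⋙ F) ⋙ (f ⋙ (r ⋙ ((ρC g).toFunctor : C ⥤ C))) =
        (((ρT (MulOpposite.op g)).toFunctor : T ⥤ T) ⋙ F) ⋙ (((ρC g).toFunctor : C ⥤ C) ⋙ (f ⋙ r))
      rw [hcomp]; rfl
    refine natTrans_hext rfl h2 _ _ ?_
    intro t
    show HEq (((ρC g).toFunctor : C ⥤ C).map
        (adj.unit.app (F.obj (((ρT (MulOpposite.op g)).toFunctor : T ⥤ T).obj t))))
      (adj.unit.app (((ρC g).toFunctor : C ⥤ C).obj (F.obj (((ρT (MulOpposite.op g)).toFunctor : T ⥤ T).obj t))))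
    exact hunit g _
  · -- counit equivariance
    intro g K
    have hcomp : (r ⋙ (f ⋙ ((ρX₀ g).toFunctor : ↥X₀ ⥤ ↥X₀))) = (((ρX₀ g).toFunctor : ↥X₀ ⥤ ↥X₀) ⋙ (r ⋙ f)) := by
      exact (congrArg (fun Φ => r ⋙ Φ) (hf g).symm).trans (congrArg (fun Φ => Φ ⋙ f) (hr g).symm)
    have h1 : ((((ρT (MulOpposite.op g)).toFunctor : T ⥤ T) ⋙ ((K ⋙ r) ⋙ f)) ⋙ ((ρX₀ g).toFunctor : ↥X₀ ⥤ ↥X₀)) =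
        ((((((ρT (MulOpposite.op g)).toFunctor : T ⥤ T) ⋙ K) ⋙ ((ρX₀ g).toFunctor : ↥X₀ ⥤ ↥X₀)) ⋙ r) ⋙ f) := by
      show (((ρT (MulOpposite.op g)).toFunctor : T ⥤ T) ⋙ K) ⋙ (r ⋙ (f ⋙ ((ρX₀ g).toFunctor : ↥X₀ ⥤ ↥X₀))) =
        (((ρT (MulOpposite.op g)).toFunctor : T ⥤ T) ⋙ K) ⋙ (((ρX₀ g).toFunctor : ↥X₀ ⥤ ↥X₀) ⋙ (r ⋙ f))
      rw [hcomp]; rfl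
    refine natTrans_hext h1 rfl _ _ ?_
    intro t
    show HEq (((ρX₀ g).toFunctor : ↥X₀ ⥤ ↥X₀).map
        (adj.counit.app (K.obj (((ρT (MulOpposite.op g)).toFunctor : T ⥤ T).obj t))))
      (adj.counit.app (((ρX₀ g).toFunctor : ↥X₀ ⥤ ↥X₀).obj (K.obj (((ρT (MulOpposite.op g)).toFunctor : T ⥤ T).obj t))))
    exact hcounit g _
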